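/- Let h : (0,1) → (0,∞) be the function assigning to each accuracy α the unique optimal weight ω = h(α) solving α ω = ((1−α)/(2^{k/2−1}Γ(k/2))) ∫_ω^∞ (u−ω) u^{k−1} e^{−u²/2} du. Then h is differentiable and h'(α) = − ω² 2^{k/2−1} Γ(k/2) / ((1−α)² ∫_ω^∞ u^k e^{−u²/2} du) evaluated at ω = h(α). -/

import Mathlib

open MeasureTheory Set Real

noncomputable def gfun (n : ℕ) (u : ℝ) : ℝ := u ^ n * Real.exp (-u ^ 2 / 2)

noncomputable def Ffun (n : ℕ) (x : ℝ) : ℝ := ∫ u in Set.Ici x, gfun n u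

lemma gcont (n : ℕ) : Continuous (gfun n) := by
  unfold gfun; fun_prop

lemma gpos (n : ℕ) {u : ℝ} (hu : 0 < u) : 0 < gfun n u := by
  unfold gfun; positivity

lemma gint (n : ℕ) {x : ℝ} (hx : 0 < x) : IntegrableOn (gfun n) (Set.Ici x) := by
  have h1 : IntegrableOn (fun u : ℝ => u ^ (n : ℝ) * Real.exp (-(1/2 : ℝ) * u ^ 2)) (Set.Ioi 0) :=
    integrableOn_rpow_mul_exp_neg_mul_sq (by norm_num) (by
      have : (0:ℝ) ≤ (n:ℝ) := Nat.cast_nonneg n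
      linarith)
  have h2 : IntegrableOn (gfun n) (Set.Ioi 0) := by
    refine h1.congr_fun (fun u hu => ?_) measurableSet_Ioi
    have hu' : (0:ℝ) < u := hu
    simp only [gfun, Real.rpow_natCast]
    ring_nf
  exact h2.mono_set (Set.Ici_subset_Ioi.mpr hx)

lemma Ffun_split (n : ℕ) {a x : ℝ} (ha : 0 < a) (hax : a ≤ x) :
    Ffun n a = (∫ u in a..x, gfun n u) + Ffun n x := by
  have hx : 0 < x := lt_of_lt_of_le ha hax
  rw [Ffun, Ffun, integral_Ici_eq_integral_Ioi, integral_Ici_eq_integral_Ioi,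
    ← Set.Ioc_union_Ioi_eq_Ioi hax,
    setIntegral_union (Set.Ioc_disjoint_Ioi le_rfl) measurableSet_Ioi
      (((gint n ha).mono_set (Set.Ioc_subset_Icc_self.trans Set.Icc_subset_Ici_self)))
      ((gint n hx).mono_set Set.Ioi_subset_Ici_self),
    intervalIntegral.integral_of_le hax]

lemma hasDerivAt_Ffun (n : ℕ) {x : ℝ} (hx : 0 < x) :
    HasDerivAt (Ffun n) (-(gfun n x)) x := by
  have key : (fun y => Ffun n (x/2) - ∫ u in (x/2)..y, gfun n u) =ᶠ[nhds x] Ffun n := by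
    filter_upwards [Ioi_mem_nhds (half_lt_self hx)] with y hy
    have := Ffun_split n (half_pos hx) (le_of_lt hy)
    linarith
  have hd : HasDerivAt (fun y => Ffun n (x/2) - ∫ u in (x/2)..y, gfun n u)
      (-(gfun n x)) x := by
    exact HasDerivAt.const_sub _
      (intervalIntegral.integral_hasDerivAt_right
        ((gcont n).intervalIntegrable _ _)
        ((gcont n).stronglyMeasurableAtFilter _ _)
        (gcont n).continuousAt)
  exact hd.congr_of_eventuallyEq key.symm

lemma Ffun_pos (n : ℕ) {x : ℝ} (hx : 0 < x) : 0 < Ffun n x := by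
  rw [Ffun]
  rw [setIntegral_pos_iff_support_of_nonneg_ae ?nonneg (gint n hx)]
  case nonneg =>
    filter_upwards [ae_restrict_mem measurableSet_Ici] with u hu
    exact le_of_lt (gpos n (lt_of_lt_of_le hx hu))
  have hsub : Set.Ici x ⊆ Function.support (gfun n) ∩ Set.Ici x := fun u hu =>
    ⟨ne_of_gt (gpos n (lt_of_lt_of_le hx hu)), hu⟩
  calc (0:ENNReal) < volume (Set.Ici x) := by simp [Real.volume_Ici]
    _ ≤ _ := measure_mono hsub

lemma pow_pred (k : ℕ) (hk : 1 ≤ k) (u : ℝ) : u ^ k = u ^ (k-1) * u := by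
  conv_lhs => rw [show k = (k-1) + 1 from (Nat.succ_pred_eq_of_pos hk).symm]
  rw [pow_succ]

noncomputable def Gfun (k : ℕ) (x : ℝ) : ℝ := Ffun k x - x * Ffun (k-1) x

lemma Gfun_integral (k : ℕ) (hk : 1 ≤ k) {x : ℝ} (hx : 0 < x) :
    (∫ u in Set.Ici x, (u - x) * u ^ (k - 1) * Real.exp (-u ^ 2 / 2)) = Gfun k x := by
  have heq : ∀ u : ℝ, (u - x) * u ^ (k - 1) * Real.exp (-u ^ 2 / 2)
      = gfun k u - x * gfun (k-1) u := by
    intro u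
    simp only [gfun, pow_pred k hk u]
    ring
  simp_rw [heq]
  rw [integral_sub (gint k hx) ((gint (k-1) hx).const_mul x), MeasureTheory.integral_const_mul]
  rfl

lemma Gfun_nonneg (k : ℕ) (hk : 1 ≤ k) {x : ℝ} (hx : 0 < x) : 0 ≤ Gfun k x := by
  rw [← Gfun_integral k hk hx]
  refine setIntegral_nonneg measurableSet_Ici (fun u hu => ?_)
  have h1 : x ≤ u := hu
  have h2 : (0:ℝ) ≤ u ^ (k-1) := pow_nonneg (by linarith) _
  exact mul_nonneg (mul_nonneg (by linarith) h2) (Real.exp_pos _).le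

lemma hasDerivAt_Gfun (k : ℕ) (hk : 1 ≤ k) {x : ℝ} (hx : 0 < x) :
    HasDerivAt (Gfun k) (-(Ffun (k-1) x)) x := by
  have h := (hasDerivAt_Ffun k hx).sub ((hasDerivAt_id x).mul (hasDerivAt_Ffun (k-1) hx))
  refine h.congr_deriv ?_
  have : x * gfun (k-1) x = gfun k x := by
    simp only [gfun, pow_pred k hk x]; ring
  simp only [id_eq, one_mul]
  linarith

theorem optimal_weight_derivative (k : ℕ) (hk : 1 ≤ k) (h : ℝ → ℝ)
    (hpos : ∀ α ∈ Set.Ioo (0:ℝ) 1, 0 < h α)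
    (heq : ∀ α ∈ Set.Ioo (0:ℝ) 1,
      α * h α = ((1 - α) / (2 ^ ((k : ℝ) / 2 - 1) * Real.Gamma ((k : ℝ) / 2))) *
        ∫ u in Set.Ici (h α), (u - h α) * u ^ (k - 1) * Real.exp (-u ^ 2 / 2)) :
    ∀ α ∈ Set.Ioo (0:ℝ) 1,
      HasDerivAt h
        (-(h α ^ 2 * 2 ^ ((k : ℝ) / 2 - 1) * Real.Gamma ((k : ℝ) / 2)) /
          ((1 - α) ^ 2 * ∫ u in Set.Ici (h α), u ^ k * Real.exp (-u ^ 2 / 2))) α := by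
  -- setup
  set C : ℝ := 2 ^ ((k : ℝ) / 2 - 1) * Real.Gamma ((k : ℝ) / 2) with hCdef
  have hC : 0 < C := by
    apply mul_pos (Real.rpow_pos_of_pos (by norm_num) _)
    exact Real.Gamma_pos_of_pos (by positivity)
  set φ : ℝ → ℝ := fun x => Gfun k x / (C * x + Gfun k x) with hφdef
  have hFpos : ∀ {x : ℝ}, 0 < x → 0 < C * x + Gfun k x := fun {x} hx =>
    add_pos_of_pos_of_nonneg (mul_pos hC hx) (Gfun_nonneg k hk hx)
  -- the implicit equation says φ (h β) = β
  have hkey : ∀ β ∈ Set.Ioo (0:ℝ) 1, φ (h β) = β := by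
    intro β hβ
    have hx := hpos β hβ
    have h1 := heq β hβ
    rw [Gfun_integral k hk hx] at h1
    have hF := hFpos hx
    rw [div_mul_eq_mul_div, eq_div_iff (ne_of_gt hC)] at h1
    show Gfun k (h β) / (C * h β + Gfun k (h β)) = β
    rw [div_eq_iff (ne_of_gt hF)]
    linear_combination -h1
  -- derivative of φ
  have hφderiv : ∀ {x : ℝ}, 0 < x →
      HasDerivAt φ (-(C * Ffun k x) / (C * x + Gfun k x) ^ 2) x := by
    intro x hx
    have hG := hasDerivAt_Gfun k hk hx
    have hF : HasDerivAt (fun y => C * y + Gfun k y) (C + -(Ffun (k-1) x)) x := by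
      exact (((hasDerivAt_id x).const_mul C).add hG).congr_deriv (by ring)
    have hd := hG.div hF (ne_of_gt (hFpos hx))
    refine hd.congr_deriv ?_
    have hGx : Gfun k x = Ffun k x - x * Ffun (k-1) x := rfl
    rw [div_eq_div_iff (pow_ne_zero 2 (ne_of_gt (hFpos hx))) (pow_ne_zero 2 (ne_of_gt (hFpos hx)))]
    rw [hGx]
    ring
  -- φ is strictly antitone on Ioi 0
  have hanti : StrictAntiOn φ (Set.Ioi 0) := by
    apply strictAntiOn_of_deriv_neg (convex_Ioi 0)
      (fun x hx => (hφderiv hx).continuousAt.continuousWithinAt)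
    intro x hx
    rw [interior_Ioi] at hx
    rw [(hφderiv hx).deriv]
    have h1 : 0 < Ffun k x := Ffun_pos k hx
    have h2 : 0 < C * x + Gfun k x := hFpos hx
    exact div_neg_of_neg_of_pos (by nlinarith) (by positivity)
  -- main proof
  intro α hα
  obtain ⟨hα0, hα1⟩ := hα
  have hx : 0 < h α := hpos α ⟨hα0, hα1⟩
  -- continuity of h at α
  have hcont : ContinuousAt h α := by
    rw [Metric.continuousAt_iff]
    intro ε hε
    set x := h α with hxdef
    set ε' : ℝ := min (ε/2) (x/2) with hε'def
    have hε' : 0 < ε' := lt_min (by linarith) (by linarith)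
    have hε'x : ε' ≤ x/2 := min_le_right _ _
    have hxm : 0 < x - ε' := by linarith
    have hxp : 0 < x + ε' := by linarith
    have h1 : φ (x + ε') < α := by
      have := hanti (Set.mem_Ioi.mpr hx) (Set.mem_Ioi.mpr hxp) (by linarith)
      rwa [hkey α ⟨hα0, hα1⟩] at this
    have h2 : α < φ (x - ε') := by
      have := hanti (Set.mem_Ioi.mpr hxm) (Set.mem_Ioi.mpr hx) (by linarith)
      rwa [hkey α ⟨hα0, hα1⟩] at this
    refine ⟨min (min (α - φ (x + ε')) (φ (x - ε') - α)) (min α (1 - α)),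
      lt_min (lt_min (by linarith) (by linarith)) (lt_min hα0 (by linarith)), ?_⟩
    intro β hβ
    rw [Real.dist_eq] at hβ ⊢
    have hβ1 : |β - α| < α - φ (x + ε') :=
      lt_of_lt_of_le hβ ((min_le_left _ _).trans (min_le_left _ _))
    have hβ2 : |β - α| < φ (x - ε') - α :=
      lt_of_lt_of_le hβ ((min_le_left _ _).trans (min_le_right _ _))
    have hβ3 : |β - α| < α :=
      lt_of_lt_of_le hβ ((min_le_right _ _).trans (min_le_left _ _))
    have hβ4 : |β - α| < 1 - α :=
      lt_of_lt_of_le hβ ((min_le_right _ _).trans (min_le_right _ _))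
    rw [abs_lt] at hβ1 hβ2 hβ3 hβ4
    have hβmem : β ∈ Set.Ioo (0:ℝ) 1 := ⟨by linarith, by linarith⟩
    have hhβ : 0 < h β := hpos β hβmem
    have hφβ : φ (h β) = β := hkey β hβmem
    have hub : h β < x + ε' := by
      by_contra hcon
      push_neg at hcon
      have := hanti.antitoneOn (Set.mem_Ioi.mpr hxp) (Set.mem_Ioi.mpr (lt_of_lt_of_le hxp hcon)) hcon
      rw [hφβ] at this
      linarith
    have hlb : x - ε' < h β := by
      by_contra hcon
      push_neg at hcon
      have := hanti.antitoneOn (Set.mem_Ioi.mpr hhβ) (Set.mem_Ioi.mpr hxm) hcon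
      rw [hφβ] at this
      linarith
    rw [abs_lt]
    constructor <;> [skip; skip] <;>
      (have : ε' ≤ ε/2 := min_le_left _ _) <;> simp only [hxdef] at hub hlb ⊢ <;> linarith
  -- inverse function theorem
  have hinv : HasDerivAt h (-(C * Ffun k (h α)) / (C * h α + Gfun k (h α)) ^ 2)⁻¹ α := by
    apply HasDerivAt.of_local_left_inverse hcont (hφderiv hx)
    · have h1 : 0 < Ffun k (h α) := Ffun_pos k hx
      have h2 : 0 < C * h α + Gfun k (h α) := hFpos hx
      have h3 : 0 < C * Ffun k (h α) := mul_pos hC h1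
      intro hcon
      rw [div_eq_zero_iff] at hcon
      rcases hcon with hcon | hcon
      · linarith
      · exact absurd hcon (by positivity)
    · filter_upwards [Ioo_mem_nhds hα0 hα1] with β hβ using hkey β hβ
  -- rewrite the derivative value
  convert hinv using 1
  have hFint : (∫ u in Set.Ici (h α), u ^ k * Real.exp (-u ^ 2 / 2)) = Ffun k (h α) := rfl
  have hFeq : (1 - α) * (C * h α + Gfun k (h α)) = C * h α := by
    have h1 := hkey α ⟨hα0, hα1⟩
    have h1' : Gfun k (h α) / (C * h α + Gfun k (h α)) = α := h1
    rw [div_eq_iff (ne_of_gt (hFpos hx))] at h1'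
    linear_combination h1'
  have h1 : 0 < Ffun k (h α) := Ffun_pos k hx
  have h2 : 0 < C * h α + Gfun k (h α) := hFpos hx
  rw [hFint]
  have hsq : (1 - α) ^ 2 * (C * h α + Gfun k (h α)) ^ 2 = C ^ 2 * h α ^ 2 := by
    linear_combination ((1 - α) * (C * h α + Gfun k (h α)) + C * h α) * hFeq
  have hrhs : (-(C * Ffun k (h α)) / (C * h α + Gfun k (h α)) ^ 2)⁻¹
      = -((C * h α + Gfun k (h α)) ^ 2) / (C * Ffun k (h α)) := by
    rw [inv_div, div_neg, neg_div]
  rw [hrhs, div_eq_div_iff (ne_of_gt (mul_pos (pow_pos (by linarith : (0:ℝ) < 1 - α) 2) h1)) (ne_of_gt (mul_pos hC h1))]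
  linear_combination (Ffun k (h α)) * hsq + (Ffun k (h α) * C * h α ^ 2) * hCdef
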